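/- Let C be a K-Banach coalgebra and M a right Banach C-comodule with coaction ρ_M : M → M ⊗̂ C. A closed subspace N ⊆ M is a closed C-subcomodule (ρ_M(N) ⊆ N ⊗̂ C) if and only if N is a closed submodule of M for the induced left C'-module structure λ · m = (id_M ⊗̄ λ)(ρ_M(m)). -/

import Mathlib

/-- An abstract model of the completed (projective) tensor product `V ⊗̂ W` of normed
spaces over a nonarchimedean field `K`: a Banach space `T` together with a continuous
bilinear map `tm` of norm `≤ 1` with dense span, satisfying the universal property of
the completed projective tensor product. -/
structure BTensor (K : Type) [NontriviallyNormedField K] (V W : Type)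
    [NormedAddCommGroup V] [NormedSpace K V]
    [NormedAddCommGroup W] [NormedSpace K W] : Type 1 where
  T : Type
  [grp : NormedAddCommGroup T]
  [mod : NormedSpace K T]
  [cpl : CompleteSpace T]
  tm : V →L[K] W →L[K] T
  tm_norm : ∀ v w, ‖tm v w‖ ≤ ‖v‖ * ‖w‖
  dense_span : Dense (Submodule.span K (Set.range fun p : V × W => (tm p.1) p.2) : Set T)
  lift : ∀ (Z : Type) [NormedAddCommGroup Z] [NormedSpace K Z] [CompleteSpace Z],
      (V →L[K] W →L[K] Z) → (T →L[K] Z)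
  lift_tm : ∀ (Z : Type) [NormedAddCommGroup Z] [NormedSpace K Z] [CompleteSpace Z]
      (b : V →L[K] W →L[K] Z) (v : V) (w : W), lift Z b (tm v w) = b v w
  lift_norm : ∀ (Z : Type) [NormedAddCommGroup Z] [NormedSpace K Z] [CompleteSpace Z]
      (b : V →L[K] W →L[K] Z), ‖lift Z b‖ ≤ ‖b‖

attribute [instance] BTensor.grp BTensor.mod BTensor.cpl

/-- `K` is discretely valued: the value group of `K` is generated by a uniformizer. -/
def DiscretelyValued (K : Type) [NontriviallyNormedField K] : Prop :=
  ∃ π : K, 0 < ‖π‖ ∧ ‖π‖ < 1 ∧ ∀ x : K, x ≠ 0 → ∃ n : ℤ, ‖x‖ = ‖π‖ ^ n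

variable {K : Type} [NontriviallyNormedField K] [CompleteSpace K]

/-- the map `(ε ⊗̄ id) : C ⊗̂ C → C`. -/
noncomputable def BTensor.counitL {C : Type} [NormedAddCommGroup C] [NormedSpace K C]
    [CompleteSpace C] (t : BTensor K C C) (ε : C →L[K] K) : t.T →L[K] C :=
  t.lift C ((ContinuousLinearMap.lsmul K K : K →L[K] C →L[K] C).comp ε)

/-- the map `(id ⊗̄ ε) : C ⊗̂ C → C`. -/
noncomputable def BTensor.counitR {C : Type} [NormedAddCommGroup C] [NormedSpace K C]
    [CompleteSpace C] (t : BTensor K C C) (ε : C →L[K] K) : t.T →L[K] C :=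
  t.lift C (((ContinuousLinearMap.lsmul K K : K →L[K] C →L[K] C).comp ε).flip)

/-- the map `(id_M ⊗̄ λ) : M ⊗̂ C → M` used to define the induced `C'`-module structure
`λ · m = (id_M ⊗̄ λ)(ρ_M m)` on a Banach comodule `M`. -/
noncomputable def BTensor.act {M C : Type} [NormedAddCommGroup M] [NormedSpace K M]
    [CompleteSpace M] [NormedAddCommGroup C] [NormedSpace K C]
    (tM : BTensor K M C) (lam : C →L[K] K) : tM.T →L[K] M :=
  tM.lift M (((ContinuousLinearMap.lsmul K K : K →L[K] M →L[K] M).comp lam).flip)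

/-- the closed subspace `N ⊗̂ C` of `M ⊗̂ C` (closure of the span of elementary tensors
with first factor in `N`). -/
def BTensor.subTensor {M C : Type} [NormedAddCommGroup M] [NormedSpace K M]
    [NormedAddCommGroup C] [NormedSpace K C]
    (tM : BTensor K M C) (N : Submodule K M) : Set tM.T :=
  closure (Submodule.span K {z : tM.T | ∃ n ∈ N, ∃ c : C, z = tM.tm n c} : Set tM.T)


section AuxLemmas

variable {C : Type} [NormedAddCommGroup C] [NormedSpace K C] [IsUltrametricDist C]

open Metric in
lemma exists_ball_center (hdv : DiscretelyValued K) (B : ℝ) (hB : 0 ≤ B)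
    (D : Set C) (hD : D.Nonempty) (μ : C → K)
    (hLip : ∀ v ∈ D, ∀ w ∈ D, ‖μ v - μ w‖ ≤ B * ‖v - w‖) (x : C) :
    ∃ c : K, ∀ v ∈ D, ‖μ v - c‖ ≤ B * ‖v - x‖ := by
  obtain ⟨π, hπ0, hπ1, hπ⟩ := hdv
  have hsub : ∀ v ∈ D, ∀ w ∈ D, ‖μ v - μ w‖ ≤ B * max ‖v - x‖ ‖w - x‖ := by
    intro v hv w hw
    refine (hLip v hv w hw).trans (mul_le_mul_of_nonneg_left ?_ hB)
    calc ‖v - w‖ = ‖(v - x) + (x - w)‖ := by rw [sub_add_sub_cancel]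
    _ ≤ max ‖v - x‖ ‖x - w‖ := IsUltrametricDist.norm_add_le_max _ _
    _ = max ‖v - x‖ ‖w - x‖ := by rw [norm_sub_rev x w]
  rcases eq_or_lt_of_le hB with hB0 | hBpos
  · obtain ⟨v₀, hv₀⟩ := hD
    refine ⟨μ v₀, fun v hv => ?_⟩
    have := hLip v hv v₀ hv₀
    rw [← hB0] at this ⊢
    simpa using this
  have hd0 : (0:ℝ) ≤ infDist x D := infDist_nonneg
  rcases eq_or_lt_of_le hd0 with hdz | hdpos
  · -- d = 0 : limit argument
    have hseq : ∀ n : ℕ, ∃ v ∈ D, ‖v - x‖ < (1/2) ^ n := by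
      intro n
      have : infDist x D < (1/2) ^ n := by rw [← hdz]; positivity
      obtain ⟨v, hv, hlt⟩ := (infDist_lt_iff hD).1 this
      exact ⟨v, hv, by rwa [dist_comm, dist_eq_norm] at hlt⟩
    choose u hu hux using hseq
    have hcauchy : CauchySeq (fun n => μ (u n)) := by
      apply cauchySeq_of_le_geometric (1/2 : ℝ) B (by norm_num)
      intro n
      rw [dist_eq_norm]
      refine (hsub _ (hu n) _ (hu (n+1))).trans ?_
      refine mul_le_mul_of_nonneg_left ?_ hB
      refine max_le (hux n).le ((hux (n+1)).le.trans ?_)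
      exact pow_le_pow_of_le_one (by norm_num) (by norm_num) (by omega)
    obtain ⟨c, hc⟩ := cauchySeq_tendsto_of_complete hcauchy
    refine ⟨c, fun v hv => ?_⟩
    have hlim : ∀ m : ℕ, ‖μ v - c‖ ≤ B * max ‖v - x‖ ((1/2)^m) + dist (μ (u m)) c := by
      intro m
      calc ‖μ v - c‖ = dist (μ v) c := (dist_eq_norm _ _).symm
      _ ≤ dist (μ v) (μ (u m)) + dist (μ (u m)) c := dist_triangle _ _ _
      _ ≤ B * max ‖v - x‖ ((1/2)^m) + dist (μ (u m)) c := by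
          refine add_le_add ?_ le_rfl
          rw [dist_eq_norm]
          exact (hsub v hv _ (hu m)).trans (mul_le_mul_of_nonneg_left
            (max_le_max le_rfl (hux m).le) hB)
    have htend : Filter.Tendsto (fun m : ℕ => B * max ‖v - x‖ ((1/2)^m) + dist (μ (u m)) c)
        Filter.atTop (nhds (B * ‖v - x‖)) := by
      have h1 : Filter.Tendsto (fun m : ℕ => ((1:ℝ)/2)^m) Filter.atTop (nhds 0) :=
        tendsto_pow_atTop_nhds_zero_of_lt_one (by norm_num) (by norm_num)
      have h2 : Filter.Tendsto (fun m : ℕ => max ‖v - x‖ ((1/2)^m)) Filter.atTop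
          (nhds (max ‖v - x‖ 0)) := tendsto_const_nhds.max h1
      rw [max_eq_left (norm_nonneg _)] at h2
      have h3 := (h2.const_mul B).add ((tendsto_iff_dist_tendsto_zero.1 hc))
      simpa using h3
    exact ge_of_tendsto htend (Filter.Eventually.of_forall hlim)
  · -- d > 0 : discreteness argument
    set ρ' := B * infDist x D with hρ'
    have hρ'pos : 0 < ρ' := mul_pos hBpos hdpos
    -- find the largest k with ρ' < ‖π‖ ^ k
    have hnonempty : ∃ k : ℤ, ρ' < ‖π‖ ^ k := by
      obtain ⟨n, hn⟩ := pow_unbounded_of_one_lt ρ' ((one_lt_inv₀ hπ0).2 hπ1)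
      exact ⟨-(n:ℤ), by rwa [zpow_neg, zpow_natCast, ← inv_pow]⟩
    have hbdd : ∃ b : ℤ, ∀ k : ℤ, ρ' < ‖π‖ ^ k → k ≤ b := by
      obtain ⟨n, hn⟩ := exists_pow_lt_of_lt_one hρ'pos hπ1
      refine ⟨n, fun k hk => ?_⟩
      by_contra hkn
      push_neg at hkn
      have : ‖π‖ ^ k ≤ ‖π‖ ^ (n:ℤ) :=
        zpow_le_zpow_right_of_le_one₀ hπ0 hπ1.le (by omega)
      rw [zpow_natCast] at this
      linarith
    obtain ⟨k₁, hk₁, hk₁max⟩ := Int.exists_greatest_of_bdd (by obtain ⟨b,hb⟩ := hbdd; exact ⟨b, hb⟩) hnonempty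
    set s₀ := ‖π‖ ^ k₁ with hs₀
    -- any norm value < s₀ is ≤ ρ'
    have hkey : ∀ y : K, ‖y‖ < s₀ → ‖y‖ ≤ ρ' := by
      intro y hy
      rcases eq_or_ne y 0 with rfl | hy0
      · simpa using hρ'pos.le
      obtain ⟨m, hm⟩ := hπ y hy0
      rw [hm] at hy ⊢
      by_contra hcon
      push_neg at hcon
      have hmk : m ≤ k₁ := hk₁max m hcon
      have : s₀ ≤ ‖π‖ ^ m := zpow_le_zpow_right_of_le_one₀ hπ0 hπ1.le hmk
      linarith
    -- choose v₀ with B * ‖v₀ - x‖ < s₀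
    have : infDist x D < s₀ / B := by
      rw [lt_div_iff₀ hBpos]
      calc infDist x D * B = ρ' := by rw [hρ']; ring
      _ < s₀ := hk₁
    obtain ⟨v₀, hv₀, hv₀lt⟩ := (infDist_lt_iff hD).1 this
    have hv₀lt' : B * ‖v₀ - x‖ < s₀ := by
      rw [dist_comm, dist_eq_norm] at hv₀lt
      calc B * ‖v₀ - x‖ < B * (s₀ / B) := by
            exact mul_lt_mul_of_pos_left hv₀lt hBpos
      _ = s₀ := by field_simp
    refine ⟨μ v₀, fun v hv => ?_⟩
    rcases le_or_gt ‖v₀ - x‖ ‖v - x‖ with hle | hlt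
    · refine (hsub v hv v₀ hv₀).trans ?_
      rw [max_eq_left hle]
    · have h1 : ‖μ v - μ v₀‖ < s₀ := by
        refine lt_of_le_of_lt ((hsub v hv v₀ hv₀).trans ?_) hv₀lt'
        rw [max_eq_right hlt.le]
      have h2 := hkey _ h1
      refine h2.trans ?_
      rw [hρ']
      refine mul_le_mul_of_nonneg_left ?_ hB
      calc infDist x D ≤ dist x v := infDist_le_dist_of_mem hv
      _ = ‖v - x‖ := by rw [dist_comm, dist_eq_norm]

open Metric in
lemma ingleton_extension (hdv : DiscretelyValued K) (B : ℝ) (hB : 0 ≤ B)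
    (p₀ : C →ₗ.[K] K) (hp₀ : ∀ v : p₀.domain, ‖p₀ v‖ ≤ B * ‖(v : C)‖) :
    ∃ Λ : C →L[K] K, (∀ v : p₀.domain, Λ v = p₀ v) ∧ ∀ c : C, ‖Λ c‖ ≤ B * ‖c‖ := by
  classical
  set s : Set (C →ₗ.[K] K) :=
    {p | ∀ v : p.domain, ‖p v‖ ≤ B * ‖(v : C)‖} with hs
  -- Zorn
  obtain ⟨m, hm₀le, hms, hmmax⟩ : ∃ m, p₀ ≤ m ∧ m ∈ s ∧ ∀ q ∈ s, m ≤ q → q ≤ m := by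
    obtain ⟨m, hle, hmax⟩ := zorn_le_nonempty₀ s (fun ch hch hchain y hy => by
      have hdir : DirectedOn (· ≤ ·) ch := hchain.directedOn
      refine ⟨LinearPMap.sSup ch hdir, ?_, fun z hz => LinearPMap.le_sSup hdir hz⟩
      rintro ⟨vc, hv⟩
      have hv2 : vc ∈ sSup (LinearPMap.domain '' ch) := hv
      have hdir2 : DirectedOn (· ≤ ·) (LinearPMap.domain '' ch) := by
        rintro _ ⟨p, hp, rfl⟩ _ ⟨q, hq, rfl⟩
        obtain ⟨r, hr, hpr, hqr⟩ := hdir p hp q hq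
        exact ⟨r.domain, Set.mem_image_of_mem _ hr, hpr.1, hqr.1⟩
      obtain ⟨_, ⟨p, hp, rfl⟩, hvp⟩ := (Submodule.mem_sSup_of_directed
        (Set.Nonempty.image _ ⟨y, hy⟩) hdir2).1 hv2
      have hval := (LinearPMap.le_sSup hdir hp).2 (x := ⟨vc, hvp⟩) (y := ⟨vc, hv⟩) rfl
      have := hch hp ⟨vc, hvp⟩
      rw [hval] at this
      exact this) p₀ hp₀
    exact ⟨m, hle, hmax.1, fun q hq hmq => hmax.2 hq hmq⟩
  -- maximal domain is everything
  have htop : m.domain = ⊤ := by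
    by_contra hne
    obtain ⟨x, hx⟩ : ∃ x : C, x ∉ m.domain := by
      by_contra hc; push_neg at hc
      exact hne (Submodule.eq_top_iff'.2 hc)
    set μ : C → K := fun c => if h : c ∈ m.domain then m ⟨c, h⟩ else 0 with hμ
    have hμval : ∀ (c : C) (h : c ∈ m.domain), μ c = m ⟨c, h⟩ := by
      intro c h; simp [hμ, h]
    have hLip : ∀ v ∈ (m.domain : Set C), ∀ w ∈ (m.domain : Set C),
        ‖μ v - μ w‖ ≤ B * ‖v - w‖ := by
      intro v hv w hw
      rw [hμval v hv, hμval w hw, ← LinearPMap.map_sub]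
      exact hms ((⟨v, hv⟩ : m.domain) - ⟨w, hw⟩)
    obtain ⟨c, hc⟩ := exists_ball_center hdv B hB (m.domain : Set C)
      ⟨0, Submodule.zero_mem _⟩ μ hLip x
    set q := m.supSpanSingleton x c hx with hq
    have hqdom : ∀ (g : C) (hg : g ∈ m.domain) (a : K), g + a • x ∈ q.domain := by
      intro g hg a
      rw [hq, LinearPMap.domain_supSpanSingleton]
      exact Submodule.mem_sup.2 ⟨g, hg, a • x,
        Submodule.smul_mem _ _ (Submodule.mem_span_singleton_self x), rfl⟩
    have qval : ∀ (g : C) (hg : g ∈ m.domain) (a : K) (w : q.domain),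
        (w : C) = g + a • x → q w = m ⟨g, hg⟩ + a • c := by
      intro g hg a w hw
      have : w = ⟨g + a • x, hqdom g hg a⟩ := Subtype.ext (by rw [hw])
      rw [this]
      exact LinearPMap.supSpanSingleton_apply_mk m x c hx g hg a
    have hmq : m ≤ q := by
      refine ⟨by rw [hq, LinearPMap.domain_supSpanSingleton]; exact le_sup_left, ?_⟩
      intro x' y' h
      have := qval (↑x') x'.2 0 y' (by rw [← h]; simp)
      rw [this]
      simp
    have hqs : q ∈ s := by
      rintro ⟨vc, hv⟩
      have h2 : vc ∈ m.domain ⊔ K ∙ x := by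
        have h3 := hv
        rw [hq, LinearPMap.domain_supSpanSingleton] at h3
        exact h3
      obtain ⟨g, hg, z, hz, hgz⟩ := Submodule.mem_sup.1 h2
      obtain ⟨a, rfl⟩ := Submodule.mem_span_singleton.1 hz
      have hval : q ⟨vc, hv⟩ = m ⟨g, hg⟩ + a • c := qval g hg a _ (by simp [← hgz])
      rw [hval]
      rcases eq_or_ne a 0 with rfl | ha
      · have hvc : vc = g := by rw [← hgz]; simp
        simp only [zero_smul, add_zero, hvc]
        simpa using hms ⟨g, hg⟩
      · have hgmem : (-a⁻¹) • g ∈ m.domain := Submodule.smul_mem _ _ hg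
        have hkey := hc ((-a⁻¹) • g) hgmem
        have hμg : μ ((-a⁻¹) • g) = (-a⁻¹) • m ⟨g, hg⟩ := by
          rw [hμval _ hgmem]
          have : (⟨(-a⁻¹) • g, hgmem⟩ : m.domain) = (-a⁻¹) • ⟨g, hg⟩ := rfl
          rw [this, LinearPMap.map_smul]
        have heq : m ⟨g, hg⟩ + a • c = (-a) • (μ ((-a⁻¹) • g) - c) := by
          rw [hμg, smul_sub, smul_smul]
          simp only [smul_eq_mul]
          field_simp
          ring
        have hnrm : ‖(-a) • (μ ((-a⁻¹) • g) - c)‖ ≤ ‖a‖ * (B * ‖(-a⁻¹) • g - x‖) := by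
          rw [norm_smul, norm_neg]
          exact mul_le_mul_of_nonneg_left hkey (norm_nonneg a)
        have hlast : ‖a‖ * (B * ‖(-a⁻¹) • g - x‖) = B * ‖vc‖ := by
          rw [← hgz]
          have h4 : ‖a‖ * (B * ‖(-a⁻¹) • g - x‖) = B * (‖a‖ * ‖(-a⁻¹) • g - x‖) := by ring
          rw [h4, ← norm_smul, smul_sub, smul_smul]
          have h7 : a * -a⁻¹ = -1 := by field_simp
          rw [h7]
          have h8 : (-1 : K) • g - a • x = -(g + a • x) := by module
          rw [h8, norm_neg]
        rw [heq]
        exact hnrm.trans (le_of_eq hlast)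
    have hle := (hmmax q hqs hmq).1
    have hxq : x ∈ q.domain := by
      have := hqdom 0 (Submodule.zero_mem _) 1
      simpa using this
    exact hx (hle hxq)
  -- build the continuous linear map
  have hmem : ∀ c : C, c ∈ m.domain := by rw [htop]; exact fun c => trivial
  set l : C →ₗ[K] K :=
    { toFun := fun c => m ⟨c, hmem c⟩
      map_add' := fun a b => m.map_add ⟨a, hmem a⟩ ⟨b, hmem b⟩
      map_smul' := fun k a => m.map_smul k ⟨a, hmem a⟩ } with hl
  have hlb : ∀ c : C, ‖l c‖ ≤ B * ‖c‖ := fun c => hms ⟨c, hmem c⟩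
  refine ⟨l.mkContinuous B hlb, fun v => ?_, fun c => hlb c⟩
  rw [LinearMap.mkContinuous_apply]
  have h6 : l (v : C) = m ⟨(v : C), hmem _⟩ := rfl
  rw [h6]
  exact (hm₀le.2 (x := v) (y := ⟨(v : C), hmem _⟩) rfl).symm

open Metric in
lemma exists_proj (hdv : DiscretelyValued K) (l : List C) (B : ℝ) (hB : 1 < B) :
    ∃ (r : ℕ) (f : Fin r → C) (lam : Fin r → C →L[K] K),
      (∀ c ∈ Submodule.span K {y : C | y ∈ l}, (∑ k, lam k c • f k) = c) ∧
      (∀ c : C, ‖∑ k, lam k c • f k‖ ≤ B * ‖c‖) := by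
  classical
  induction l generalizing B with
  | nil =>
      refine ⟨0, Fin.elim0, Fin.elim0, ?_, ?_⟩
      · intro c hc
        have hset : {y : C | y ∈ ([] : List C)} = (∅ : Set C) := by ext y; simp
        rw [hset, Submodule.span_empty, Submodule.mem_bot] at hc
        simp [hc]
      · intro c
        simp only [Finset.univ_eq_empty, Finset.sum_empty, norm_zero]
        positivity
  | cons x l ih =>
      have hB' : 1 < (1 + B) / 2 := by linarith
      have hB'B : (1 + B) / 2 < B := by linarith
      set B' := (1 + B) / 2 with hB'def
      obtain ⟨r, f, lam, h1, h2⟩ := ih B' hB'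
      have hset : {y : C | y ∈ x :: l} = insert x {y : C | y ∈ l} := by
        ext y; simp [List.mem_cons]
      by_cases hx : x ∈ Submodule.span K {y : C | y ∈ l}
      · refine ⟨r, f, lam, ?_, fun c => (h2 c).trans ?_⟩
        · intro c hc
          apply h1
          rwa [hset, Submodule.span_insert_eq_span hx] at hc
        · exact mul_le_mul_of_nonneg_right hB'B.le (norm_nonneg c)
      · set F' := Submodule.span K {y : C | y ∈ l} with hF'
        haveI : FiniteDimensional K F' := FiniteDimensional.span_of_finite K (l.finite_toSet)
        have hclosed : IsClosed (F' : Set C) := Submodule.closed_of_finiteDimensional F'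
        have hdpos : 0 < infDist x (F' : Set C) := by
          rw [← hclosed.notMem_iff_infDist_pos ⟨0, F'.zero_mem⟩]
          exact hx
        set d := infDist x (F' : Set C) with hd
        have hBB' : (0:ℝ) < B / B' := by positivity
        have hBB'1 : (1:ℝ) < B / B' := (one_lt_div (by linarith)).2 hB'B
        have hdd : d < d * (B / B') := by nlinarith
        obtain ⟨f₀, hf₀, hf₀lt⟩ := (infDist_lt_iff ⟨0, F'.zero_mem⟩).1 hdd
        set x' := x - f₀ with hx'def
        have hx'norm : ‖x'‖ < d * (B / B') := by
          rw [hx'def, ← dist_eq_norm]; exact hf₀lt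
        have hx'mem : x' ∉ F' := by
          intro hmem
          exact hx (by simpa [hx'def] using F'.add_mem hmem hf₀)
        have hlow : ∀ g ∈ F', d ≤ ‖x' - g‖ := by
          intro g hg
          have : dist x (f₀ + g) = ‖x' - g‖ := by
            rw [dist_eq_norm, hx'def]; congr 1; abel
          rw [hd, ← this]
          exact infDist_le_dist_of_mem (F'.add_mem hf₀ hg)
        -- partial functional on F' ⊔ K x'
        set p1 : C →ₗ.[K] K := ⟨F', 0⟩ with hp1
        have hx'p1 : x' ∉ p1.domain := hx'mem
        set q0 := p1.supSpanSingleton x' 1 hx'p1 with hq0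
        have hq0dom : ∀ (g : C), g ∈ F' → ∀ (a : K), g + a • x' ∈ q0.domain := by
          intro g hg a
          rw [hq0, LinearPMap.domain_supSpanSingleton]
          exact Submodule.mem_sup.2 ⟨g, hg, a • x',
            Submodule.smul_mem _ _ (Submodule.mem_span_singleton_self x'), rfl⟩
        have hq0val : ∀ (g : C) (hg : g ∈ F') (a : K) (w : q0.domain),
            (w : C) = g + a • x' → q0 w = a := by
          intro g hg a w hw
          have : w = ⟨g + a • x', hq0dom g hg a⟩ := Subtype.ext (by rw [hw])
          rw [this]
          have := LinearPMap.supSpanSingleton_apply_mk p1 x' 1 hx'p1 g hg a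
          rw [this]
          simp only [smul_eq_mul, mul_one, RingHom.id_apply]
          have hz0 : (p1 ⟨g, hg⟩ : K) = 0 := rfl
          rw [hz0, zero_add]
        have hq0bound : ∀ v : q0.domain, ‖q0 v‖ ≤ d⁻¹ * ‖(v : C)‖ := by
          rintro ⟨vc, hv⟩
          have h2' : vc ∈ F' ⊔ K ∙ x' := by
            have h3 := hv
            rw [hq0, LinearPMap.domain_supSpanSingleton] at h3
            exact h3
          obtain ⟨g, hg, z, hz, hgz⟩ := Submodule.mem_sup.1 h2'
          obtain ⟨a, rfl⟩ := Submodule.mem_span_singleton.1 hz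
          rw [hq0val g hg a _ (by simp [← hgz])]
          rcases eq_or_ne a 0 with rfl | ha
          · simp; positivity
          · have hda : d * ‖a‖ ≤ ‖vc‖ := by
              have := hlow ((-a⁻¹) • g) (Submodule.smul_mem _ _ hg)
              have h5 : ‖a‖ * ‖x' - (-a⁻¹) • g‖ = ‖vc‖ := by
                rw [← norm_smul, ← hgz]
                congr 1
                rw [smul_sub, smul_smul, mul_neg, mul_inv_cancel₀ ha]
                module
              calc d * ‖a‖ ≤ ‖x' - (-a⁻¹) • g‖ * ‖a‖ :=
                    mul_le_mul_of_nonneg_right this (norm_nonneg a)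
              _ = ‖vc‖ := by rw [mul_comm]; exact h5
            show ‖a‖ ≤ d⁻¹ * ‖vc‖
            calc ‖a‖ = d⁻¹ * (d * ‖a‖) := by field_simp
            _ ≤ d⁻¹ * ‖vc‖ := mul_le_mul_of_nonneg_left hda (by positivity)
        obtain ⟨μ, hμval, hμbound⟩ := ingleton_extension hdv d⁻¹ (by positivity) q0 hq0bound
        have hμx' : μ x' = 1 := by
          have hm : x' ∈ q0.domain := by
            have := hq0dom 0 F'.zero_mem 1; simpa using this
          have := hμval ⟨x', hm⟩
          rw [this, hq0val 0 F'.zero_mem 1 ⟨x', hm⟩ (by simp)]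
        have hμF' : ∀ g ∈ F', μ g = 0 := by
          intro g hg
          have hm : g ∈ q0.domain := by
            have := hq0dom g hg 0; simpa using this
          have := hμval ⟨g, hm⟩
          rw [this, hq0val g hg 0 ⟨g, hm⟩ (by simp)]
        set S : C →L[K] C := ContinuousLinearMap.id K C - μ.smulRight x' with hS
        have hSapp : ∀ c : C, S c = c - μ c • x' := by
          intro c; simp [hS]
        refine ⟨r + 1, Fin.cons x' f, Fin.cons μ (fun k => (lam k).comp S), ?_, ?_⟩
        · intro c hc
          rw [hset] at hc
          obtain ⟨a, z, hz, rfl⟩ := Submodule.mem_span_insert.1 hc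
          have hμc : μ (a • x + z) = a := by
            have hxx : (x : C) = x' + f₀ := by rw [hx'def]; abel
            rw [map_add, map_smul, hxx, map_add, hμx', hμF' z hz, hμF' f₀ hf₀]
            simp
          have hSc : S (a • x + z) = a • f₀ + z := by
            rw [hSapp, hμc, hx'def]
            rw [smul_sub]
            abel
          have hScmem : a • f₀ + z ∈ F' := F'.add_mem (F'.smul_mem a hf₀) hz
          rw [Fin.sum_univ_succ]
          simp only [Fin.cons_zero, Fin.cons_succ, ContinuousLinearMap.comp_apply]
          rw [hSc, h1 _ hScmem, hμc, hx'def, smul_sub]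
          abel
        · intro c
          have hterm0 : ‖μ c • x'‖ ≤ (B / B') * ‖c‖ := by
            rw [norm_smul]
            calc ‖μ c‖ * ‖x'‖ ≤ (d⁻¹ * ‖c‖) * (d * (B / B')) :=
                  mul_le_mul (hμbound c) hx'norm.le (norm_nonneg _) (by positivity)
            _ = (B / B') * ‖c‖ := by field_simp
          have hSc : ‖S c‖ ≤ (B / B') * ‖c‖ := by
            rw [hSapp]
            have hmax := IsUltrametricDist.norm_add_le_max c (-(μ c • x'))
            rw [← sub_eq_add_neg, norm_neg] at hmax
            refine hmax.trans (max_le ?_ hterm0)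
            nlinarith [norm_nonneg c]
          rw [Fin.sum_univ_succ]
          simp only [Fin.cons_zero, Fin.cons_succ, ContinuousLinearMap.comp_apply]
          refine (IsUltrametricDist.norm_add_le_max _ _).trans (max_le ?_ ?_)
          · refine hterm0.trans ?_
            have : B / B' ≤ B := by
              rw [div_le_iff₀ (by linarith)]
              nlinarith
            nlinarith [norm_nonneg c]
          · refine (h2 (S c)).trans ?_
            calc B' * ‖S c‖ ≤ B' * ((B / B') * ‖c‖) :=
                  mul_le_mul_of_nonneg_left hSc (by linarith)
            _ = B * ‖c‖ := by field_simp

end AuxLemmas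

/-- Let `C` be a `K`-Banach coalgebra and `M` a right Banach
`C`-comodule with coaction `ρ : M → M ⊗̂ C`.  A closed subspace `N ⊆ M` is a closed
`C`-subcomodule (`ρ(N) ⊆ N ⊗̂ C`) if and only if `N` is a closed submodule of `M`
for the induced left `C'`-module structure `λ · m = (id_M ⊗̄ λ)(ρ m)`. -/
theorem subcomodule_iff_dual_submodule
    [IsUltrametricDist K] (hdv : DiscretelyValued K)
    (C : Type) [NormedAddCommGroup C] [NormedSpace K C] [CompleteSpace C]
    [IsUltrametricDist C]
    (M : Type) [NormedAddCommGroup M] [NormedSpace K M] [CompleteSpace M]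
    [IsUltrametricDist M]
    -- the coalgebra `C`
    (t : BTensor K C C) (Δ : C →L[K] t.T) (ε : C →L[K] K)
    (hcounitL : (t.counitL ε).comp Δ = ContinuousLinearMap.id K C)
    (hcounitR : (t.counitR ε).comp Δ = ContinuousLinearMap.id K C)
    -- the comodule `M`
    (tM : BTensor K M C) (ρ : M →L[K] tM.T)
    (hcounit : (tM.act ε).comp ρ = ContinuousLinearMap.id K M)
    -- coassociativity of the coaction: `(ρ ⊗ id) ∘ ρ = (id ⊗ Δ) ∘ ρ`
    (tMl : BTensor K tM.T C) (tMr : BTensor K M t.T)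
    (asc : tMr.T →L[K] tMl.T)
    (hasc : ∀ (m : M) (c d : C), asc (tMr.tm m (t.tm c d)) = tMl.tm (tM.tm m c) d)
    (hcoassoc : (tM.lift tMl.T (tMl.tm.comp ρ)).comp ρ =
        (asc.comp (tM.lift tMr.T ((tMr.tm.flip.comp Δ).flip))).comp ρ)
    -- the closed subspace `N`
    (N : Submodule K M) (hN : IsClosed (N : Set M)) :
    (∀ n ∈ N, ρ n ∈ tM.subTensor N) ↔
    (∀ (lam : C →L[K] K), ∀ n ∈ N, tM.act lam (ρ n) ∈ N) := by
  constructor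
  · -- subcomodule implies submodule for the dual action
    intro h lam n hn
    have hz := h n hn
    simp only [BTensor.subTensor] at hz
    have hmaps : Set.MapsTo (tM.act lam)
        (Submodule.span K {z : tM.T | ∃ n ∈ N, ∃ c : C, z = tM.tm n c} : Set tM.T)
        (N : Set M) := by
      intro y hy
      simp only [SetLike.mem_coe] at hy ⊢
      induction hy using Submodule.span_induction with
      | mem z hzmem =>
          obtain ⟨n', hn', c, rfl⟩ := hzmem
          have hval : tM.act lam (tM.tm n' c) = lam c • n' := by
            simp only [BTensor.act]
            rw [tM.lift_tm]
            simp
          rw [hval]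
          exact N.smul_mem _ hn'
      | zero => rw [map_zero]; exact N.zero_mem
      | add a b _ _ ha hb => rw [map_add]; exact N.add_mem ha hb
      | smul a x _ hx => rw [map_smul]; exact N.smul_mem _ hx
    have hmem := map_mem_closure (tM.act lam).continuous hz hmaps
    rwa [hN.closure_eq] at hmem
  · -- submodule for the dual action implies subcomodule
    intro h n hn
    simp only [BTensor.subTensor]
    rw [Metric.mem_closure_iff]
    intro ε hε
    -- approximate ρ n by a finite sum of elementary tensors
    have hzc : ρ n ∈ closure (Submodule.span K
        (Set.range fun p : M × C => (tM.tm p.1) p.2) : Set tM.T) := tM.dense_span _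
    obtain ⟨w, hw, hwd⟩ := Metric.mem_closure_iff.1 hzc (ε/4) (by linarith)
    have hw' : w ∈ Submodule.span K (Set.range fun p : M × C => (tM.tm p.1) p.2) := hw
    obtain ⟨cf, hcf⟩ := Finsupp.mem_span_range_iff_exists_finsupp.1 hw'
    have hw2 : w = ∑ p ∈ cf.support, cf p • tM.tm p.1 p.2 := by rw [← hcf]; rfl
    -- a bounded finite-rank projection fixing the second legs
    set l : List C := cf.support.toList.map Prod.snd with hl
    obtain ⟨r, f, lam, h1, h2⟩ := exists_proj hdv l 2 one_lt_two
    set Pr : C →L[K] C := ∑ k, (lam k).smulRight (f k) with hPr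
    have hPrapp : ∀ c : C, Pr c = ∑ k, lam k c • f k := by
      intro c
      simp [hPr, ContinuousLinearMap.sum_apply, ContinuousLinearMap.smulRight_apply]
    have hPrnorm : ∀ c : C, ‖Pr c‖ ≤ 2 * ‖c‖ := fun c => by rw [hPrapp]; exact h2 c
    have hPrfix : ∀ p ∈ cf.support, Pr p.2 = p.2 := by
      intro p hp
      rw [hPrapp]
      refine h1 _ (Submodule.subset_span ?_)
      show p.2 ∈ {y : C | y ∈ l}
      simp only [hl, Set.mem_setOf_eq, List.mem_map]
      exact ⟨p, Finset.mem_toList.2 hp, rfl⟩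
    -- the operator id ⊗ Pr on M ⊗̂ C
    set b : M →L[K] C →L[K] tM.T := (tM.tm.flip.comp Pr).flip with hb
    have hbapp : ∀ (m : M) (c : C), b m c = tM.tm m (Pr c) := by
      intro m c
      simp [hb, ContinuousLinearMap.flip_apply, ContinuousLinearMap.comp_apply]
    have hbnorm : ‖b‖ ≤ 2 := by
      refine ContinuousLinearMap.opNorm_le_bound _ (by norm_num) fun m => ?_
      refine ContinuousLinearMap.opNorm_le_bound _ (by positivity) fun c => ?_
      rw [hbapp]
      calc ‖tM.tm m (Pr c)‖ ≤ ‖m‖ * ‖Pr c‖ := tM.tm_norm m (Pr c)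
      _ ≤ ‖m‖ * (2 * ‖c‖) := mul_le_mul_of_nonneg_left (hPrnorm c) (norm_nonneg m)
      _ = 2 * ‖m‖ * ‖c‖ := by ring
    set T : tM.T →L[K] tM.T := tM.lift tM.T b with hT
    have hTnorm : ‖T‖ ≤ 2 := (tM.lift_norm tM.T b).trans hbnorm
    have hTtm : ∀ (m : M) (c : C), T (tM.tm m c) = tM.tm m (Pr c) := by
      intro m c
      rw [hT, tM.lift_tm, hbapp]
    -- T agrees with the finite sum of slice operators
    set R : tM.T →L[K] tM.T := ∑ k, (tM.tm.flip (f k)).comp (tM.act (lam k)) with hR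
    have hRapp : ∀ v : tM.T, R v = ∑ k, tM.tm (tM.act (lam k) v) (f k) := by
      intro v
      simp [hR, ContinuousLinearMap.sum_apply, ContinuousLinearMap.comp_apply,
        ContinuousLinearMap.flip_apply]
    have hact : ∀ (k : Fin r) (m : M) (c : C),
        tM.act (lam k) (tM.tm m c) = lam k c • m := by
      intro k m c
      simp only [BTensor.act]
      rw [tM.lift_tm]
      simp
    have hTR : T = R := by
      refine ContinuousLinearMap.ext_on tM.dense_span ?_
      rintro _ ⟨p, rfl⟩
      rw [hTtm, hRapp]
      calc tM.tm p.1 (Pr p.2) = tM.tm p.1 (∑ k, lam k p.2 • f k) := by rw [hPrapp]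
      _ = ∑ k, lam k p.2 • tM.tm p.1 (f k) := by
          rw [map_sum]
          exact Finset.sum_congr rfl fun k _ => by rw [map_smul]
      _ = ∑ k, tM.tm (tM.act (lam k) (tM.tm p.1 p.2)) (f k) := by
          refine Finset.sum_congr rfl fun k _ => ?_
          rw [hact, map_smul, ContinuousLinearMap.smul_apply]
    have hTw : T w = w := by
      rw [hw2, map_sum]
      refine Finset.sum_congr rfl fun p hp => ?_
      rw [map_smul, hTtm, hPrfix p hp]
    have hTz : T (ρ n) = ∑ k, tM.tm (tM.act (lam k) (ρ n)) (f k) := by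
      rw [hTR, hRapp]
    refine ⟨T (ρ n), ?_, ?_⟩
    · rw [hTz]
      simp only [SetLike.mem_coe]
      refine Submodule.sum_mem _ fun k _ => Submodule.subset_span ?_
      exact ⟨tM.act (lam k) (ρ n), h (lam k) n hn, f k, rfl⟩
    · have hTd : dist w (T (ρ n)) ≤ 2 * dist (ρ n) w := by
        calc dist w (T (ρ n)) = ‖T w - T (ρ n)‖ := by rw [hTw, dist_eq_norm]
        _ = ‖T (w - ρ n)‖ := by rw [map_sub]
        _ ≤ ‖T‖ * ‖w - ρ n‖ := T.le_opNorm _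
        _ ≤ 2 * ‖w - ρ n‖ := mul_le_mul_of_nonneg_right hTnorm (norm_nonneg _)
        _ = 2 * dist (ρ n) w := by rw [dist_eq_norm, norm_sub_rev]
      calc dist (ρ n) (T (ρ n)) ≤ dist (ρ n) w + dist w (T (ρ n)) := dist_triangle _ _ _
      _ ≤ dist (ρ n) w + 2 * dist (ρ n) w := by linarith
      _ < ε/4 + 2 * (ε/4) := by linarith
      _ < ε := by linarith
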